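/- Helstrom bound (qubit case): for density matrices ρ, σ on ℂ² and priors p, q ≥ 0 with p+q=1, any two-outcome POVM {E, I−E} (with 0 ≤ E ≤ I) discriminating ρ from σ succeeds with probability p·tr(Eρ) + q·tr((I−E)σ) ≤ 1/2 + (1/2)·‖pρ − qσ‖₁, where ‖A‖₁ = tr√(A†A). -/

import Mathlib

open Matrix ComplexOrder

section helpers
variable {n : Type*} [Fintype n] [DecidableEq n]

lemma psd_trace_re_nonneg {A : Matrix n n ℂ} (hA : A.PosSemidef) : 0 ≤ A.trace.re := by
  have h : ∀ i, 0 ≤ (A i i).re := by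
    intro i
    have := hA.re_dotProduct_nonneg (Pi.single i 1)
    simpa [dotProduct, mulVec, Pi.single_apply] using this
  simpa [Matrix.trace, Matrix.diag, Complex.re_sum] using Finset.sum_nonneg (fun i _ => h i)

lemma trace_mul_psd_re_nonneg {A B : Matrix n n ℂ} (hA : A.PosSemidef) (hB : B.PosSemidef) :
    0 ≤ (A * B).trace.re := by
  set S : Matrix n n ℂ := cfc Real.sqrt B with hSdef
  have hS : S.IsHermitian := (cfc_predicate Real.sqrt B : IsSelfAdjoint S)
  have hSS : S * S = B := by
    rw [hSdef, ← cfc_mul Real.sqrt Real.sqrt B]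
    conv_rhs => rw [← cfc_id ℝ B hB.1.isSelfAdjoint]
    refine cfc_congr (fun x hx => ?_)
    rw [hB.1.spectrum_real_eq_range_eigenvalues] at hx
    obtain ⟨i, rfl⟩ := hx
    exact Real.mul_self_sqrt (hB.eigenvalues_nonneg i)
  have key : (A * B).trace = (S * A * S).trace := by
    conv_lhs => rw [← hSS, ← mul_assoc]
    rw [Matrix.trace_mul_cycle]
  have h2 := hA.conjTranspose_mul_mul_same S
  rw [hS.eq] at h2
  rw [key]
  exact psd_trace_re_nonneg h2

end helpers

/-- The trace norm ‖A‖₁ = tr √(AᴴA) of a 2×2 complex matrix. -/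
noncomputable def traceNorm (A : Matrix (Fin 2) (Fin 2) ℂ) : ℝ :=
  (((Matrix.posSemidef_conjTranspose_mul_self A).1.eigenvectorUnitary : Matrix (Fin 2) (Fin 2) ℂ) *
    diagonal (((↑) : ℝ → ℂ) ∘ (fun x : ℝ => √x) ∘ (Matrix.posSemidef_conjTranspose_mul_self A).1.eigenvalues) *
    (star (Matrix.posSemidef_conjTranspose_mul_self A).1.eigenvectorUnitary : Matrix (Fin 2) (Fin 2) ℂ)).trace.re

theorem stmt_6 (ρ σ E : Matrix (Fin 2) (Fin 2) ℂ)
    (hρ : ρ.PosSemidef) (hρ1 : ρ.trace = 1)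
    (hσ : σ.PosSemidef) (hσ1 : σ.trace = 1)
    (p q : ℝ) (hp : 0 ≤ p) (hq : 0 ≤ q) (hpq : p + q = 1)
    (hE : E.PosSemidef) (hE1 : (1 - E).PosSemidef) :
    p * (E * ρ).trace.re + q * ((1 - E) * σ).trace.re ≤
      1 / 2 + 1 / 2 * traceNorm ((p : ℂ) • ρ - (q : ℂ) • σ) := by
  set Δ : Matrix (Fin 2) (Fin 2) ℂ := (p : ℂ) • ρ - (q : ℂ) • σ with hΔdef
  have hΔh : Δ.IsHermitian := by
    simp [hΔdef, Matrix.IsHermitian, Matrix.conjTranspose_sub, Matrix.conjTranspose_smul,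
      hρ.1.eq, hσ.1.eq, Complex.star_def, Complex.conj_ofReal]
  set U : Matrix (Fin 2) (Fin 2) ℂ := (hΔh.eigenvectorUnitary : Matrix (Fin 2) (Fin 2) ℂ) with hUdef
  set lam := hΔh.eigenvalues with hlam
  have hUU : U * star U = 1 := (Matrix.mem_unitaryGroup_iff).mp (hΔh.eigenvectorUnitary).2
  have hUU' : star U * U = 1 := (Matrix.mem_unitaryGroup_iff').mp (hΔh.eigenvectorUnitary).2
  have traceConj : ∀ D : Matrix (Fin 2) (Fin 2) ℂ, (U * D * star U).trace = D.trace := by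
    intro D
    rw [Matrix.trace_mul_cycle, hUU', one_mul]
  set D : Matrix (Fin 2) (Fin 2) ℂ := Matrix.diagonal (RCLike.ofReal ∘ lam) with hD
  have hspec : Δ = U * D * star U := hΔh.spectral_theorem
  set Dp : Matrix (Fin 2) (Fin 2) ℂ := Matrix.diagonal (fun i => ((max (lam i) 0 : ℝ) : ℂ)) with hDp
  set Da : Matrix (Fin 2) (Fin 2) ℂ := Matrix.diagonal (fun i => ((|lam i| : ℝ) : ℂ)) with hDa
  set posΔ : Matrix (Fin 2) (Fin 2) ℂ := U * Dp * star U with hpos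
  set absΔ : Matrix (Fin 2) (Fin 2) ℂ := U * Da * star U with habs
  have hDpPSD : Dp.PosSemidef := Matrix.PosSemidef.diagonal (fun i =>
    Complex.zero_le_real.mpr (le_max_right _ _))
  have hDaPSD : Da.PosSemidef := Matrix.PosSemidef.diagonal (fun i =>
    Complex.zero_le_real.mpr (abs_nonneg _))
  have hposPSD : posΔ.PosSemidef := by
    have := hDpPSD.mul_mul_conjTranspose_same U
    rwa [← Matrix.star_eq_conjTranspose] at this
  have hdiffPSD : (posΔ - Δ).PosSemidef := by
    have heq : posΔ - Δ = U * (Dp - D) * star U := by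
      rw [hspec, hpos, Matrix.mul_sub, Matrix.sub_mul]
    rw [heq]
    have hDpD : (Dp - D).PosSemidef := by
      have heq2 : Dp - D = Matrix.diagonal (fun i => ((max (lam i) 0 - lam i : ℝ) : ℂ)) := by
        rw [hDp, hD, Matrix.diagonal_sub]
        congr 1
        funext i
        push_cast [Function.comp_apply]
        rfl
      rw [heq2]
      exact Matrix.PosSemidef.diagonal (fun i =>
        Complex.zero_le_real.mpr (by simp [le_max_left]))
    have := hDpD.mul_mul_conjTranspose_same U
    rwa [← Matrix.star_eq_conjTranspose] at this
  have habsPSD : absΔ.PosSemidef := by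
    have := hDaPSD.mul_mul_conjTranspose_same U
    rwa [← Matrix.star_eq_conjTranspose] at this
  have hsq : absΔ ^ 2 = Δᴴ * Δ := by
    have h1 : Δᴴ = Δ := hΔh.eq
    rw [h1, hspec, habs, pow_two]
    have e1 : U * Da * star U * (U * Da * star U) = U * (Da * (star U * U) * Da) * star U := by
      noncomm_ring
    rw [e1, hUU', mul_one]
    have e2 : U * D * star U * (U * D * star U) = U * (D * (star U * U) * D) * star U := by
      noncomm_ring
    rw [e2, hUU', mul_one]
    have e4 : ∀ i : Fin 2, ((|lam i| : ℝ) : ℂ) * ((|lam i| : ℝ) : ℂ)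
        = (RCLike.ofReal ∘ lam) i * (RCLike.ofReal ∘ lam) i := by
      intro i
      show ((|lam i| : ℝ) : ℂ) * ((|lam i| : ℝ) : ℂ) = ((lam i : ℝ) : ℂ) * ((lam i : ℝ) : ℂ)
      rw [← Complex.ofReal_mul, ← Complex.ofReal_mul, abs_mul_abs_self]
    have e3 : Da * Da = D * D := by
      rw [hDa, hD, Matrix.diagonal_mul_diagonal, Matrix.diagonal_mul_diagonal]
      exact congrArg Matrix.diagonal (funext e4)
    rw [e3]
  have hsqrt_eq : absΔ =
      ((Matrix.posSemidef_conjTranspose_mul_self Δ).1.eigenvectorUnitary : Matrix (Fin 2) (Fin 2) ℂ) *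
        diagonal (((↑) : ℝ → ℂ) ∘ (fun x : ℝ => √x) ∘
          (Matrix.posSemidef_conjTranspose_mul_self Δ).1.eigenvalues) *
        (star (Matrix.posSemidef_conjTranspose_mul_self Δ).1.eigenvectorUnitary :
          Matrix (Fin 2) (Fin 2) ℂ) := by
    have h1 := (Matrix.posSemidef_conjTranspose_mul_self Δ).1.cfc_eq Real.sqrt
    simp only [Matrix.IsHermitian.cfc, Unitary.conjStarAlgAut_apply] at h1
    refine Eq.trans ?_ h1
    have h2 : Δᴴ * Δ = cfc (· ^ 2 : ℝ → ℝ) Δ := by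
      rw [cfc_pow_id Δ 2 hΔh.isSelfAdjoint, hΔh.eq, pow_two]
    rw [h2, ← cfc_comp Real.sqrt (· ^ 2) Δ hΔh.isSelfAdjoint]
    have h3 : cfc (Real.sqrt ∘ (· ^ 2 : ℝ → ℝ)) Δ = cfc (fun x : ℝ => |x|) Δ :=
      cfc_congr (fun x _ => Real.sqrt_sq_eq_abs x)
    rw [h3, hΔh.cfc_eq, Matrix.IsHermitian.cfc, Unitary.conjStarAlgAut_apply]
    rfl
  have hTN : traceNorm Δ = ∑ i, |lam i| := by
    rw [traceNorm, ← hsqrt_eq, habs, traceConj, hDa, Matrix.trace_diagonal]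
    rw [Complex.re_sum]
    simp
  have htrΔ : Δ.trace = ((p - q : ℝ) : ℂ) := by
    rw [hΔdef]
    simp [Matrix.trace_sub, Matrix.trace_smul, hρ1, hσ1]
  have htrD : D.trace = ∑ i, ((lam i : ℝ) : ℂ) := by
    rw [hD, Matrix.trace_diagonal]; rfl
  have hsumlam : ∑ i, lam i = p - q := by
    have h5 : Δ.trace = D.trace := by rw [hspec, traceConj]
    rw [htrΔ, htrD] at h5
    push_cast at h5
    have h6 : (p - q : ℝ) = ∑ i, lam i := by exact_mod_cast h5
    exact h6.symm
  have htrpos : posΔ.trace.re = ((p - q) + ∑ i, |lam i|) / 2 := by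
    rw [hpos, traceConj, hDp, Matrix.trace_diagonal, Complex.re_sum]
    simp only [Complex.ofReal_re]
    have key : ∀ i : Fin 2, max (lam i) 0 = (lam i + |lam i|) / 2 := by
      intro i
      rcases le_or_gt (lam i) 0 with h | h
      · rw [max_eq_right h, abs_of_nonpos h]; ring
      · rw [max_eq_left h.le, abs_of_pos h]; ring
    rw [Finset.sum_congr rfl (fun i _ => key i), ← Finset.sum_div, Finset.sum_add_distrib,
      hsumlam]
  have ineq1 : (E * Δ).trace.re ≤ (E * posΔ).trace.re := by
    have h0 := trace_mul_psd_re_nonneg hE hdiffPSD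
    have e : E * (posΔ - Δ) = E * posΔ - E * Δ := by noncomm_ring
    rw [e, Matrix.trace_sub, Complex.sub_re] at h0
    linarith
  have ineq2 : (E * posΔ).trace.re ≤ posΔ.trace.re := by
    have h0 := trace_mul_psd_re_nonneg hE1 hposPSD
    have e : (1 - E) * posΔ = posΔ - E * posΔ := by noncomm_ring
    rw [e, Matrix.trace_sub, Complex.sub_re] at h0
    linarith
  have hEΔ : (E * Δ).trace.re = p * (E * ρ).trace.re - q * (E * σ).trace.re := by
    have e : E * Δ = (p : ℂ) • (E * ρ) - (q : ℂ) • (E * σ) := by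
      rw [hΔdef]; rw [Matrix.mul_sub, Matrix.mul_smul, Matrix.mul_smul]
    rw [e, Matrix.trace_sub, Matrix.trace_smul, Matrix.trace_smul]
    simp [Complex.sub_re, smul_eq_mul, Complex.mul_re, Complex.ofReal_re, Complex.ofReal_im]
  have hEσ : ((1 - E) * σ).trace.re = 1 - (E * σ).trace.re := by
    have e : (1 - E) * σ = σ - E * σ := by noncomm_ring
    rw [e, Matrix.trace_sub, Complex.sub_re, hσ1]
    norm_num
  rw [hEσ, hTN]
  have final := ineq1.trans ineq2
  rw [hEΔ, htrpos] at final
  linarith
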